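/- There is an absolute constant C > 0 such that the following holds for all n ≥ 1, all real k > 0, and all ε ∈ (0,1] with ε/√n ≤ 1/2. Let (X, A) be a pair of random variables on {0,1} × ℕ where X is uniform on {0,1}, the conditional distribution of A given X=0 is Poisson(k/2), and the conditional distribution of A given X=1 is the even mixture (1/2)·Poisson(k(1/2 + ε/√n)) + (1/2)·Poisson(k(1/2 − ε/√n)). Then I(X;A) ≤ C·k²·ε⁴/n². -/

import Mathlib

/-- The Poisson probability mass function with rate `lam`. -/
noncomputable def poissonPMF (lam : ℝ) (k : ℕ) : ℝ :=
  Real.exp (-lam) * lam ^ k / (Nat.factorial k)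

/-- Mutual information (in bits) of a joint distribution `mu` of a pair `(X, A)` with values
in `{0,1} × ℕ`; terms where the joint probability is `0` contribute `0`
(automatic since `0 * log 0 = 0`). -/
noncomputable def mutualInfoBoolNat (mu : Bool × ℕ → ℝ) : ℝ :=
  ∑' z : Bool × ℕ,
    mu z * Real.logb 2 (mu z / ((∑' a : ℕ, mu (z.1, a)) * (mu (false, z.2) + mu (true, z.2))))

/-- The joint distribution of `(X, A)` where `X` is uniform on `{0,1}`, `A | X=0` is
`Poisson(k/2)`, and `A | X=1` is the even mixture of `Poisson(k(1/2 + ε/√n))` and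
`Poisson(k(1/2 − ε/√n))`. -/
noncomputable def muNine (n : ℕ) (k ε : ℝ) : Bool × ℕ → ℝ := fun z =>
  if z.1 then
    (1/2) * ((1/2) * poissonPMF (k * (1/2 + ε / Real.sqrt n)) z.2
      + (1/2) * poissonPMF (k * (1/2 - ε / Real.sqrt n)) z.2)
  else (1/2) * poissonPMF (k / 2) z.2

lemma pois_nonneg {lam : ℝ} (h : 0 ≤ lam) (a : ℕ) : 0 ≤ poissonPMF lam a := by
  unfold poissonPMF; positivity

lemma pois_pos {lam : ℝ} (h : 0 < lam) (a : ℕ) : 0 < poissonPMF lam a := by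
  unfold poissonPMF; positivity

lemma pois_eq (lam : ℝ) (a : ℕ) :
    poissonPMF lam a = Real.exp (-lam) * (lam ^ a / (Nat.factorial a)) := by
  unfold poissonPMF; ring

lemma pois_summable (lam : ℝ) : Summable (poissonPMF lam) :=
  ((Real.summable_pow_div_factorial lam).mul_left _).congr fun a => (pois_eq lam a).symm

lemma tsum_exp (x : ℝ) : ∑' a : ℕ, x ^ a / (Nat.factorial a) = Real.exp x := by
  rw [Real.exp_eq_exp_ℝ, NormedSpace.exp_eq_tsum_div]

lemma pois_tsum (lam : ℝ) : ∑' a, poissonPMF lam a = 1 := by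
  simp only [pois_eq]
  rw [tsum_mul_left, tsum_exp, ← Real.exp_add]
  simp

lemma pois_prod_eq {l : ℝ} (hl : 0 < l) (m1 m2 : ℝ) (a : ℕ) :
    poissonPMF m1 a * poissonPMF m2 a / poissonPMF l a
      = Real.exp (l - m1 - m2) * ((m1 * m2 / l) ^ a / (Nat.factorial a)) := by
  unfold poissonPMF
  rw [show l - m1 - m2 = (-m1) + (-m2) + -(-l) by ring, Real.exp_add, Real.exp_add,
    Real.exp_neg (-l), div_pow, mul_pow]
  have hfa : (0:ℝ) < (Nat.factorial a : ℝ) := by exact_mod_cast Nat.factorial_pos a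
  have he : Real.exp (-l) ≠ 0 := Real.exp_ne_zero _
  field_simp

lemma pois_prod_summable {l : ℝ} (hl : 0 < l) (m1 m2 : ℝ) :
    Summable (fun a => poissonPMF m1 a * poissonPMF m2 a / poissonPMF l a) :=
  ((Real.summable_pow_div_factorial (m1 * m2 / l)).mul_left _).congr
    fun a => (pois_prod_eq hl m1 m2 a).symm

lemma pois_prod_tsum {l : ℝ} (hl : 0 < l) (m1 m2 : ℝ) :
    ∑' a, poissonPMF m1 a * poissonPMF m2 a / poissonPMF l a
      = Real.exp ((m1 - l) * (m2 - l) / l) := by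
  rw [tsum_congr (pois_prod_eq hl m1 m2), tsum_mul_left, tsum_exp, ← Real.exp_add]
  congr 1
  field_simp
  ring

lemma cosh_bound {t : ℝ} (ht0 : 0 ≤ t) (ht : t ≤ 2) :
    Real.exp t + Real.exp (-t) - 2 ≤ 8 * t ^ 2 := by
  have h1 : 1 - t ≤ Real.exp (-t) := by
    have := Real.add_one_le_exp (-t); linarith
  have h2 : Real.exp t * Real.exp (-t) = 1 := by
    rw [← Real.exp_add]; simp
  have h3 : Real.exp t ≤ Real.exp 2 := Real.exp_le_exp.mpr ht
  have h4 : Real.exp 2 ≤ 7.4 := by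
    have h5 : Real.exp 1 ≤ 2.7182818286 := Real.exp_one_lt_d9.le
    have h6 : Real.exp 2 = Real.exp 1 * Real.exp 1 := by
      rw [← Real.exp_add]; norm_num
    nlinarith [Real.exp_pos 1]
  have h5 : Real.exp (-t) ≤ 1 := by
    rw [Real.exp_le_one_iff]; linarith
  have h6 : (1:ℝ) ≤ Real.exp t := by
    rw [Real.one_le_exp_iff]; exact ht0
  have key : Real.exp t + Real.exp (-t) - 2 = (Real.exp t - 1) * (1 - Real.exp (-t)) := by
    nlinarith [h2]
  have hu1 : Real.exp t - 1 ≤ t * Real.exp t := by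
    nlinarith [Real.exp_pos t, h1, h2]
  rw [key]
  have hv : 1 - Real.exp (-t) ≤ t := by linarith
  nlinarith [Real.exp_pos t]

set_option maxHeartbeats 2000000 in
lemma main_bound {k δ : ℝ} (hk : 0 < k) (hδ0 : 0 < δ) (hδ : δ ≤ 1/2)
    (mu : Bool × ℕ → ℝ)
    (hmu : ∀ z, mu z = if z.1 then (1/2) * ((1/2) * poissonPMF (k * (1/2 + δ)) z.2
          + (1/2) * poissonPMF (k * (1/2 - δ)) z.2) else (1/2) * poissonPMF (k / 2) z.2) :
    mutualInfoBoolNat mu ≤ 12 * k ^ 2 * δ ^ 4 := by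
  have hl0 : 0 < k / 2 := by linarith
  have hlp : 0 < k * (1/2 + δ) := by nlinarith
  have hlm : 0 ≤ k * (1/2 - δ) := by nlinarith
  set l0 : ℝ := k / 2 with hl0d
  set lp : ℝ := k * (1/2 + δ) with hlpd
  set lm : ℝ := k * (1/2 - δ) with hlmd
  set p0 : ℕ → ℝ := poissonPMF l0 with hp0d
  set qp : ℕ → ℝ := poissonPMF lp with hqpd
  set qm : ℕ → ℝ := poissonPMF lm with hqmd
  set p1 : ℕ → ℝ := fun a => (1/2) * qp a + (1/2) * qm a with hp1d
  have hp0pos : ∀ a, 0 < p0 a := pois_pos hl0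
  have hqppos : ∀ a, 0 < qp a := pois_pos hlp
  have hqmnn : ∀ a, 0 ≤ qm a := pois_nonneg hlm
  have hp1pos : ∀ a, 0 < p1 a := by
    intro a; have := hqppos a; have := hqmnn a; simp only [hp1d]; nlinarith
  have hmf : ∀ a, mu (false, a) = (1/2) * p0 a := by intro a; rw [hmu]; simp
  have hmt : ∀ a, mu (true, a) = (1/2) * p1 a := by
    intro a; rw [hmu]; simp only [hp1d]; norm_num
  have hp1sum : Summable p1 :=
    ((pois_summable lp).mul_left _).add ((pois_summable lm).mul_left _)
  clear_value l0 lp lm p0 qp qm p1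
  have hp1ts : ∑' a, p1 a = 1 := by
    simp only [hp1d, hqpd, hqmd]
    rw [Summable.tsum_add ((pois_summable lp).mul_left _) ((pois_summable lm).mul_left _),
      tsum_mul_left, tsum_mul_left, pois_tsum, pois_tsum]
    norm_num
  have hrowS : ∀ b, Summable (fun a => mu (b, a)) := by
    intro b
    cases b
    · refine (((pois_summable l0).mul_left (1/2 : ℝ)).congr fun a => ?_)
      rw [hmf, hp0d]
    · exact (hp1sum.mul_left _).congr fun a => (hmt a).symm
  have hmarg : ∀ b, ∑' a, mu (b, a) = 1/2 := by
    intro b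
    cases b
    · rw [tsum_congr hmf, hp0d, tsum_mul_left, pois_tsum]; norm_num
    · rw [tsum_congr hmt, tsum_mul_left, hp1ts]; norm_num
  have hmupos : ∀ z, 0 < mu z := by
    rintro ⟨b, a⟩
    cases b
    · rw [hmf]; have := hp0pos a; linarith
    · rw [hmt]; have := hp1pos a; linarith
  have hmunn : (0 : Bool × ℕ → ℝ) ≤ mu := fun z => (hmupos z).le
  have hmuS : Summable mu := by
    rw [summable_prod_of_nonneg hmunn]
    exact ⟨hrowS, Summable.of_finite⟩
  have hmuts : ∑' z, mu z = 1 := by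
    rw [Summable.tsum_prod' hmuS hrowS, tsum_bool, hmarg, hmarg]; norm_num
  have hSpos : ∀ a : ℕ, 0 < mu (false, a) + mu (true, a) := by
    intro a; have := hmupos (false, a); have := hmupos (true, a); linarith
  have hmuleS : ∀ z : Bool × ℕ, mu z ≤ mu (false, z.2) + mu (true, z.2) := by
    rintro ⟨b, a⟩
    cases b
    · have := hmupos (true, a); simp; linarith
    · have := hmupos (false, a); simp; linarith
  have hIexpr : mutualInfoBoolNat mu
      = ∑' z : Bool × ℕ, mu z * Real.logb 2 (mu z / ((1/2) * (mu (false, z.2) + mu (true, z.2)))) := by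
    unfold mutualInfoBoolNat
    exact tsum_congr fun z => by rw [hmarg z.1]
  rw [hIexpr]
  by_cases hcase : k * δ ^ 2 ≤ 1
  · -- small case
    have hlog2 : 0 < Real.log 2 := Real.log_pos one_lt_two
    have hfh : ∀ z : Bool × ℕ,
        mu z * Real.logb 2 (mu z / ((1/2) * (mu (false, z.2) + mu (true, z.2)))) ≤ ((2 * mu z ^ 2 / (mu (false, z.2) + mu (true, z.2)) - mu z) * (Real.log 2)⁻¹) := by
      intro z
      have hS := hSpos z.2
      have hmz := hmupos z
      have hr : 0 < mu z / ((1/2) * (mu (false, z.2) + mu (true, z.2))) := by positivity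
      have hlr : Real.log (mu z / ((1/2) * (mu (false, z.2) + mu (true, z.2)))) ≤ mu z / ((1/2) * (mu (false, z.2) + mu (true, z.2))) - 1 :=
        Real.log_le_sub_one_of_pos hr
      have step1 : mu z * Real.logb 2 (mu z / ((1/2) * (mu (false, z.2) + mu (true, z.2))))
          ≤ mu z * ((mu z / ((1/2) * (mu (false, z.2) + mu (true, z.2))) - 1) / Real.log 2) := by
        rw [Real.logb]
        gcongr
      refine step1.trans (le_of_eq ?_)
      field_simp
    have hmuleS' : ∀ z : Bool × ℕ, mu z ≤ (mu (false, z.2) + mu (true, z.2)) := hmuleS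
    have hhabs : ∀ z : Bool × ℕ, ‖((2 * mu z ^ 2 / (mu (false, z.2) + mu (true, z.2)) - mu z) * (Real.log 2)⁻¹)‖ ≤ mu z * (Real.log 2)⁻¹ := by
      intro z
      have hS := hSpos z.2
      have hmz := hmupos z
      have hle := hmuleS' z
      have h1 : 0 ≤ (2 * mu z ^ 2 / (mu (false, z.2) + mu (true, z.2))) := by positivity
      have h2 : (2 * mu z ^ 2 / (mu (false, z.2) + mu (true, z.2))) ≤ 2 * mu z := by
        rw [div_le_iff₀ hS]
        nlinarith
      rw [Real.norm_eq_abs, abs_mul, abs_of_nonneg (inv_nonneg.mpr hlog2.le)]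
      have : |(2 * mu z ^ 2 / (mu (false, z.2) + mu (true, z.2))) - mu z| ≤ mu z := by
        rw [abs_le]; constructor <;> nlinarith
      exact mul_le_mul_of_nonneg_right this (inv_nonneg.mpr hlog2.le)
    have hhS : Summable (fun z : Bool × ℕ => (2 * mu z ^ 2 / (mu (false, z.2) + mu (true, z.2)) - mu z) * (Real.log 2)⁻¹) :=
      Summable.of_norm_bounded (hmuS.mul_right _) hhabs
    have hg1S : Summable (fun z : Bool × ℕ => 2 * mu z ^ 2 / (mu (false, z.2) + mu (true, z.2))) := by
      have : Summable (fun z => ((2 * mu z ^ 2 / (mu (false, z.2) + mu (true, z.2)) - mu z) * (Real.log 2)⁻¹) * Real.log 2 + mu z) := (hhS.mul_right _).add hmuS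
      refine this.congr fun z => ?_
      field_simp
      ring
    have hg1row : ∀ b, Summable (fun a => (2 * mu (b, a) ^ 2 / (mu (false, a) + mu (true, a)))) := by
      intro b
      refine Summable.of_nonneg_of_le (fun a => ?_) (fun a => ?_) ((hrowS b).mul_left 2)
      · have := hSpos a; have := hmupos (b, a); positivity
      · have hS := hSpos a
        have hle := hmuleS' (b, a)
        have hmz := hmupos (b, a)
        rw [div_le_iff₀ hS]
        nlinarith
    have hts_h : ∑' z, ((2 * mu z ^ 2 / (mu (false, z.2) + mu (true, z.2)) - mu z) * (Real.log 2)⁻¹) = ((∑' z, (2 * mu z ^ 2 / (mu (false, z.2) + mu (true, z.2)))) - 1) * (Real.log 2)⁻¹ := by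
      rw [tsum_mul_right, Summable.tsum_sub hg1S hmuS, hmuts]
    -- Poisson product sums
    have hp0sum : Summable p0 := by rw [hp0d]; exact pois_summable l0
    have hp0ts : ∑' a, p0 a = 1 := by rw [hp0d]; exact pois_tsum l0
    have hPSpp : Summable (fun a => qp a * qp a / p0 a) := by
      rw [hp0d, hqpd]; exact pois_prod_summable hl0 lp lp
    have hPSpm : Summable (fun a => qp a * qm a / p0 a) := by
      rw [hp0d, hqpd, hqmd]; exact pois_prod_summable hl0 lp lm
    have hPSmm : Summable (fun a => qm a * qm a / p0 a) := by
      rw [hp0d, hqmd]; exact pois_prod_summable hl0 lm lm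
    have hFpp : ∑' a, qp a * qp a / p0 a = Real.exp ((lp - l0) * (lp - l0) / l0) := by
      rw [hp0d, hqpd]; exact pois_prod_tsum hl0 lp lp
    have hFpm : ∑' a, qp a * qm a / p0 a = Real.exp ((lp - l0) * (lm - l0) / l0) := by
      rw [hp0d, hqpd, hqmd]; exact pois_prod_tsum hl0 lp lm
    have hFmm : ∑' a, qm a * qm a / p0 a = Real.exp ((lm - l0) * (lm - l0) / l0) := by
      rw [hp0d, hqmd]; exact pois_prod_tsum hl0 lm lm
    have hkne : k ≠ 0 := ne_of_gt hk
    have hep : (lp - l0) * (lp - l0) / l0 = 2 * k * δ ^ 2 := by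
      rw [hlpd, hl0d]; field_simp; ring
    have hem : (lm - l0) * (lm - l0) / l0 = 2 * k * δ ^ 2 := by
      rw [hlmd, hl0d]; field_simp; ring
    have hepm : (lp - l0) * (lm - l0) / l0 = -(2 * k * δ ^ 2) := by
      rw [hlpd, hlmd, hl0d]; field_simp; ring
    set t : ℝ := 2 * k * δ ^ 2 with htd
    have hWdecomp : ∀ a, (p0 a - p1 a) ^ 2 / p0 a
        = p0 a - 2 * p1 a + ((1/4) * (qp a * qp a / p0 a)
          + (1/2) * (qp a * qm a / p0 a) + (1/4) * (qm a * qm a / p0 a)) := by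
      intro a
      have h0 : p0 a ≠ 0 := (hp0pos a).ne'
      simp only [hp1d]
      field_simp
      ring
    have hWS : Summable (fun a => (p0 a - p1 a) ^ 2 / p0 a) := by
      have : Summable (fun a => p0 a - 2 * p1 a + ((1/4) * (qp a * qp a / p0 a)
          + (1/2) * (qp a * qm a / p0 a) + (1/4) * (qm a * qm a / p0 a))) := by
        refine Summable.add (Summable.sub hp0sum (hp1sum.mul_left 2)) ?_
        exact ((hPSpp.mul_left _).add (hPSpm.mul_left _)).add (hPSmm.mul_left _)
      exact this.congr fun a => (hWdecomp a).symm
    have hWts : ∑' a, (p0 a - p1 a) ^ 2 / p0 a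
        = (1/2) * Real.exp t + (1/2) * Real.exp (-t) - 1 := by
      rw [tsum_congr hWdecomp]
      rw [Summable.tsum_add (Summable.sub hp0sum (hp1sum.mul_left 2))
        (((hPSpp.mul_left _).add (hPSpm.mul_left _)).add (hPSmm.mul_left _)),
        Summable.tsum_sub hp0sum (hp1sum.mul_left 2),
        Summable.tsum_add ((hPSpp.mul_left _).add (hPSpm.mul_left _)) (hPSmm.mul_left _),
        Summable.tsum_add (hPSpp.mul_left _) (hPSpm.mul_left _),
        tsum_mul_left, tsum_mul_left, tsum_mul_left, tsum_mul_left,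
        hp0ts, hp1ts, hFpp, hFpm, hFmm, hep, hem, hepm]
      ring
    -- bound the bool-summed g1 pointwise
    have hg1sum_pt : ∀ a, (2 * mu (false, a) ^ 2 / (mu (false, a) + mu (true, a))) + (2 * mu (true, a) ^ 2 / (mu (false, a) + mu (true, a)))
        ≤ (mu (false, a) + mu (true, a)) + (1/2) * ((p0 a - p1 a) ^ 2 / p0 a) := by
      intro a
      have hx := hp0pos a
      have hy := hp1pos a
      have hSa : (mu (false, a) + mu (true, a)) = (1/2) * p0 a + (1/2) * p1 a := by
        rw [hmf, hmt]
      have hgf : (2 * mu (false, a) ^ 2 / (mu (false, a) + mu (true, a))) = p0 a ^ 2 / (p0 a + p1 a) := by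
        rw [hmf, hmt]
        have : (1:ℝ)/2 * p0 a + 1/2 * p1 a ≠ 0 := by positivity
        field_simp
      have hgt : (2 * mu (true, a) ^ 2 / (mu (false, a) + mu (true, a))) = p1 a ^ 2 / (p0 a + p1 a) := by
        rw [hmf, hmt]
        have : (1:ℝ)/2 * p0 a + 1/2 * p1 a ≠ 0 := by positivity
        field_simp
      rw [hgf, hgt, hSa]
      have key : p0 a ^ 2 / (p0 a + p1 a) + p1 a ^ 2 / (p0 a + p1 a)
          = ((1/2) * p0 a + (1/2) * p1 a) + (p0 a - p1 a) ^ 2 / (2 * (p0 a + p1 a)) := by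
        have hxy : p0 a + p1 a ≠ 0 := by positivity
        field_simp
        ring
      rw [key]
      have : (p0 a - p1 a) ^ 2 / (2 * (p0 a + p1 a)) ≤ (p0 a - p1 a) ^ 2 / (2 * p0 a) := by
        rw [div_le_div_iff₀ (by positivity) (by positivity)]
        nlinarith [mul_le_mul_of_nonneg_left (by linarith : 2 * p0 a ≤ 2 * (p0 a + p1 a))
          (sq_nonneg (p0 a - p1 a))]
      have e : (p0 a - p1 a) ^ 2 / (2 * p0 a) = 1/2 * ((p0 a - p1 a) ^ 2 / p0 a) := by
        ring
      linarith [this, e]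
    have hStsum : Summable (fun a => mu (false, a) + mu (true, a)) := (hrowS false).add (hrowS true)
    have hSts : ∑' a, (mu (false, a) + mu (true, a)) = 1 := by
      rw [Summable.tsum_add (hrowS false) (hrowS true), hmarg, hmarg]; norm_num
    have hg1ts_le : ∑' z, (2 * mu z ^ 2 / (mu (false, z.2) + mu (true, z.2))) ≤ 1 + (1/2) * ((1/2) * Real.exp t + (1/2) * Real.exp (-t) - 1) := by
      rw [Summable.tsum_prod' hg1S hg1row, tsum_bool,
        ← Summable.tsum_add (hg1row false) (hg1row true)]
      calc ∑' a, ((2 * mu (false, a) ^ 2 / (mu (false, a) + mu (true, a))) + (2 * mu (true, a) ^ 2 / (mu (false, a) + mu (true, a))))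
          ≤ ∑' a, ((mu (false, a) + mu (true, a)) + (1/2) * ((p0 a - p1 a) ^ 2 / p0 a)) := by
            exact Summable.tsum_le_tsum hg1sum_pt ((hg1row false).add (hg1row true))
              (hStsum.add (hWS.mul_left _))
        _ = 1 + (1/2) * ((1/2) * Real.exp t + (1/2) * Real.exp (-t) - 1) := by
            rw [Summable.tsum_add hStsum (hWS.mul_left _), tsum_mul_left, hSts, hWts]
    have ht0 : 0 ≤ t := by rw [htd]; positivity
    have ht2 : t ≤ 2 := by rw [htd]; nlinarith
    have hcosh := cosh_bound ht0 ht2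
    have hg1final : ∑' z, (2 * mu z ^ 2 / (mu (false, z.2) + mu (true, z.2))) - 1 ≤ 2 * t ^ 2 := by
      have : (1/2) * ((1/2) * Real.exp t + (1/2) * Real.exp (-t) - 1) ≤ 2 * t ^ 2 := by
        nlinarith
      linarith [hg1ts_le]
    -- conclude
    by_cases hsumf : Summable (fun z : Bool × ℕ =>
        mu z * Real.logb 2 (mu z / ((1/2) * (mu (false, z.2) + mu (true, z.2)))))
    · have step : ∑' z : Bool × ℕ, mu z * Real.logb 2 (mu z / ((1/2) * (mu (false, z.2) + mu (true, z.2))))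
          ≤ ∑' z, ((2 * mu z ^ 2 / (mu (false, z.2) + mu (true, z.2)) - mu z) * (Real.log 2)⁻¹) := Summable.tsum_le_tsum hfh hsumf hhS
      have hlog23 : (2:ℝ) * (Real.log 2)⁻¹ ≤ 3 := by
        have := Real.log_two_gt_d9
        rw [mul_inv_le_iff₀ hlog2]
        nlinarith
      have step2 : ∑' z, ((2 * mu z ^ 2 / (mu (false, z.2) + mu (true, z.2)) - mu z) * (Real.log 2)⁻¹) ≤ 2 * t ^ 2 * (Real.log 2)⁻¹ := by
        rw [hts_h]
        have := inv_nonneg.mpr hlog2.le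
        nlinarith [hg1final]
      have : 2 * t ^ 2 * (Real.log 2)⁻¹ ≤ 3 * t ^ 2 := by
        have h1 : 2 * t ^ 2 * (Real.log 2)⁻¹ = (2 * (Real.log 2)⁻¹) * t ^ 2 := by ring
        rw [h1]
        have ht2' : 0 ≤ t ^ 2 := sq_nonneg t
        nlinarith
      have hfin : (3:ℝ) * t ^ 2 = 12 * k ^ 2 * δ ^ 4 := by rw [htd]; ring
      linarith [step, step2, this, hfin.le]
    · rw [tsum_eq_zero_of_not_summable hsumf]
      positivity
  · -- large case : k * δ^2 > 1
    push_neg at hcase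
    have hbig : 1 ≤ 12 * k ^ 2 * δ ^ 4 := by nlinarith
    by_cases hsumf : Summable (fun z : Bool × ℕ =>
        mu z * Real.logb 2 (mu z / ((1/2) * (mu (false, z.2) + mu (true, z.2)))))
    · have hpt : ∀ z : Bool × ℕ,
          mu z * Real.logb 2 (mu z / ((1/2) * (mu (false, z.2) + mu (true, z.2)))) ≤ mu z := by
        intro z
        have hS := hSpos z.2
        have hmz := hmupos z
        have hle := hmuleS z
        have hr : 0 < mu z / ((1/2) * (mu (false, z.2) + mu (true, z.2))) := by positivity
        have hr2 : mu z / ((1/2) * (mu (false, z.2) + mu (true, z.2))) ≤ 2 := by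
          rw [div_le_iff₀ (by positivity)]
          linarith
        have : Real.logb 2 (mu z / ((1/2) * (mu (false, z.2) + mu (true, z.2)))) ≤ 1 := by
          calc Real.logb 2 (mu z / ((1/2) * (mu (false, z.2) + mu (true, z.2))))
              ≤ Real.logb 2 2 := Real.logb_le_logb_of_le one_lt_two hr hr2
            _ = 1 := Real.logb_self_eq_one one_lt_two
        nlinarith
      calc ∑' z : Bool × ℕ, mu z * Real.logb 2 (mu z / ((1/2) * (mu (false, z.2) + mu (true, z.2))))
          ≤ ∑' z, mu z := Summable.tsum_le_tsum hpt hsumf hmuS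
        _ = 1 := hmuts
        _ ≤ 12 * k ^ 2 * δ ^ 4 := hbig
    · rw [tsum_eq_zero_of_not_summable hsumf]
      positivity

theorem stmt9 : ∃ C : ℝ, 0 < C ∧
    ∀ (n : ℕ), 1 ≤ n → ∀ (k : ℝ), 0 < k → ∀ (ε : ℝ), ε ∈ Set.Ioc (0:ℝ) 1 →
      ε / Real.sqrt n ≤ 1/2 →
      mutualInfoBoolNat (muNine n k ε) ≤ C * k ^ 2 * ε ^ 4 / (n : ℝ) ^ 2 := by
  refine ⟨12, by norm_num, ?_⟩
  intro n hn k hk ε hε hhalf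
  obtain ⟨hε0, hε1⟩ := hε
  have hnp : (0:ℝ) < (n:ℝ) := by exact_mod_cast Nat.lt_of_lt_of_le Nat.zero_lt_one hn
  have hn0 : (0:ℝ) < Real.sqrt n := Real.sqrt_pos.mpr hnp
  set δ := ε / Real.sqrt n with hδd
  have hδ0 : 0 < δ := div_pos hε0 hn0
  have h := main_bound hk hδ0 hhalf (muNine n k ε) (fun z => rfl)
  have heq : 12 * k ^ 2 * δ ^ 4 = 12 * k ^ 2 * ε ^ 4 / (n:ℝ) ^ 2 := by
    rw [hδd, div_pow]
    have h4 : (Real.sqrt n) ^ 4 = (n:ℝ) ^ 2 := by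
      rw [show 4 = 2*2 from rfl, pow_mul, Real.sq_sqrt hnp.le]
    rw [h4]; ring
  linarith [h, heq.le]
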